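/- arXiv:math/0511313 — 3 statements merged into one kernel-verified Lean document; each statement's English description precedes it below -/
import Mathlib

section
/- Let A be an algebra with a term t Mal'cev modulo F and G. Then for all reflexive admissible relations R, S on A: R + S ⊆ (F(R) + F(S)) ∘ cl(R ∪ S) ∘ (G(R) + G(S)) ⊆ (F(R) + F(S)) ∘ R ∘ S ∘ (G(R) + G(S)), where R + S = ⋃ₙ R ∘ₙ S is the join (union of all finite alternating compositions). -/
structure Signature where
  symbols : Type
  arity : symbols → ℕ

structure UAAlgebra (σ : Signature) where
  carrier : Type
  ops : ∀ s, (Fin (σ.arity s) → carrier) → carrier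

namespace Paper

variable {σ : Signature}

/-- Binary relations on the carrier of an algebra. -/
abbrev Rel (A : UAAlgebra σ) := A.carrier → A.carrier → Prop

/-- A relation is admissible (compatible) if it is preserved by all operations,
i.e. it is a subalgebra of `A × A`. -/
def Compatible (A : UAAlgebra σ) (R : Rel A) : Prop :=
  ∀ s (f g : Fin (σ.arity s) → A.carrier),
    (∀ j, R (f j) (g j)) → R (A.ops s f) (A.ops s g)

/-- Reflexive and admissible. -/
def RAdm (A : UAAlgebra σ) (R : Rel A) : Prop :=
  Reflexive R ∧ Compatible A R

/-- Relational composition. -/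
def comp {A : UAAlgebra σ} (R S : Rel A) : Rel A :=
  fun a c => ∃ b, R a b ∧ S b c

/-- `cl A X` : the least compatible relation containing `X`. -/
def cl (A : UAAlgebra σ) (X : Rel A) : Rel A :=
  fun a b => ∀ S : Rel A, Compatible A S → (∀ x y, X x y → S x y) → S a b

/-- The least reflexive compatible relation containing `X`. -/
def clRefl (A : UAAlgebra σ) (X : Rel A) : Rel A :=
  fun a b => ∀ S : Rel A, Reflexive S → Compatible A S → (∀ x y, X x y → S x y) → S a b

/-- `altComp R S n` is `R ∘ₙ S`, the alternating composition
`R ∘ S ∘ R ∘ ⋯` with `n` factors (`n - 1` occurrences of `∘`);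
by convention `R ∘₀ S` is the identity relation. -/
def altComp {A : UAAlgebra σ} (R S : Rel A) : ℕ → Rel A
  | 0 => Eq
  | n + 1 => comp R (altComp S R n)

/-- `relPow R n = Rⁿ`, with `R⁰` the identity relation. -/
def relPow {A : UAAlgebra σ} (R : Rel A) : ℕ → Rel A
  | 0 => Eq
  | n + 1 => comp R (relPow R n)

/-- The join `R + S = ⋃ₙ R ∘ₙ S`. -/
def join {A : UAAlgebra σ} (R S : Rel A) : Rel A :=
  fun a b => ∃ n, altComp R S n a b

/-- Converse relation `R⁻`. -/
def conv {A : UAAlgebra σ} (R : Rel A) : Rel A :=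
  fun a b => R b a

/-- Composition of a finite list of relations (empty list gives the identity). -/
def compList {A : UAAlgebra σ} : List (Rel A) → Rel A
  | [] => Eq
  | r :: l => comp r (compList l)

/-- Join of a family of relations: the union of all finite compositions of members. -/
def joinFam {A : UAAlgebra σ} {ι : Type} (R : ι → Rel A) : Rel A :=
  fun a b => ∃ l : List ι, compList (l.map R) a b

/-- The smallest congruence containing `X`. -/
def cg (A : UAAlgebra σ) (X : Rel A) : Rel A :=
  fun a b => ∀ S : Rel A, Equivalence S → Compatible A S →
    (∀ x y, X x y → S x y) → S a b

/-- Terms of the signature `σ` in `n` variables. -/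
inductive Term (σ : Signature) (n : ℕ) : Type
  | var : Fin n → Term σ n
  | op : ∀ s, (Fin (σ.arity s) → Term σ n) → Term σ n

/-- Evaluation of a term in an algebra under an environment. -/
def Term.eval {n : ℕ} (A : UAAlgebra σ) (env : Fin n → A.carrier) : Term σ n → A.carrier
  | .var k => env k
  | .op s args => A.ops s fun j => (args j).eval A env

/-- The ternary term operation induced by a ternary term. -/
def tApp (A : UAAlgebra σ) (t : Term σ 3) (a b c : A.carrier) : A.carrier :=
  t.eval A ![a, b, c]

/-- `t` is Mal'cev modulo `F` and `G`: whenever `a R b` with `R` reflexive admissible,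
`a F(R) t(a,b,b)` and `t(a,a,b) G(R) b`. -/
def MalcevMod (A : UAAlgebra σ) (F G : Rel A → Rel A) (t : Term σ 3) : Prop :=
  ∀ R : Rel A, RAdm A R → ∀ a b : A.carrier, R a b →
    F R a (tApp A t a b b) ∧ G R (tApp A t a a b) b

end Paper

open Paper

namespace Aux
open Paper

variable {σ : Signature} {A : UAAlgebra σ}

theorem eval_compat {K : Rel A} (hK : Compatible A K) {k : ℕ} (u : Term σ k)
    {e1 e2 : Fin k → A.carrier} (h : ∀ i, K (e1 i) (e2 i)) :
    K (u.eval A e1) (u.eval A e2) := by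
  induction u with
  | var i => exact h i
  | op s args ih => exact hK s _ _ fun j => ih j

theorem tApp_compat {K : Rel A} (hK : Compatible A K) (t : Term σ 3)
    {a b c a' b' c' : A.carrier} (h1 : K a a') (h2 : K b b') (h3 : K c c') :
    K (tApp A t a b c) (tApp A t a' b' c') := by
  apply eval_compat hK
  intro i
  fin_cases i
  · exact h1
  · exact h2
  · exact h3

theorem cl_compatible (X : Rel A) : Compatible A (cl A X) :=
  fun s f g h => fun K hK hX => hK s f g (fun j => h j K hK hX)

theorem cl_base {X : Rel A} {x y : A.carrier} (h : X x y) : cl A X x y :=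
  fun _ _ hX => hX x y h

theorem join_refl {R S : Rel A} (a : A.carrier) : join R S a a := ⟨0, rfl⟩

theorem altComp_tail : ∀ (n : ℕ) (R S : Rel A), Reflexive R → Reflexive S →
    ∀ {a b c : A.carrier}, altComp R S n a b → (R b c ∨ S b c) → ∃ m, altComp R S m a c := by
  intro n
  induction n with
  | zero =>
    intro R S hR _ a b c hab h
    cases hab
    rcases h with h | h
    · exact ⟨1, ⟨c, h, rfl⟩⟩
    · exact ⟨2, ⟨a, hR a, c, h, rfl⟩⟩
  | succ n ih =>
    intro R S hR hS a b c hab h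
    obtain ⟨x, hax, hxb⟩ := hab
    obtain ⟨m, hm⟩ := ih S R hS hR hxb h.symm
    exact ⟨m + 1, ⟨x, hax, hm⟩⟩

theorem join_tail {R S : Rel A} (hR : Reflexive R) (hS : Reflexive S)
    {a b c : A.carrier} (hab : join R S a b) (h : R b c ∨ S b c) : join R S a c := by
  obtain ⟨n, hn⟩ := hab
  exact altComp_tail n R S hR hS hn h

theorem join_head {R S : Rel A} (hR : Reflexive R) (hS : Reflexive S)
    {a b c : A.carrier} (h : R a b ∨ S a b) (hbc : join R S b c) : join R S a c := by
  obtain ⟨n, hn⟩ := hbc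
  rcases h with h | h
  · exact ⟨n + 2, ⟨b, h, b, hS b, hn⟩⟩
  · exact ⟨n + 2, ⟨a, hR a, b, h, hn⟩⟩

theorem exists_chain : ∀ (n : ℕ) (R S : Rel A), Reflexive R → Reflexive S →
    ∀ {a c : A.carrier}, altComp R S n a c →
    ∃ av : ℕ → A.carrier, av 0 = a ∧ av n = c ∧
      ∀ i, (if i % 2 = 0 then R else S) (av i) (av (i + 1)) := by
  intro n
  induction n with
  | zero =>
    intro R S hR hS a c h
    cases h
    refine ⟨fun _ => a, rfl, rfl, fun i => ?_⟩
    split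
    · exact hR a
    · exact hS a
  | succ n ih =>
    intro R S hR hS a c h
    obtain ⟨b, hab, hbc⟩ := h
    obtain ⟨av, h0, hn, hcons⟩ := ih S R hS hR hbc
    refine ⟨fun i => Nat.rec a (fun j _ => av j) i, rfl, hn, fun i => ?_⟩
    match i with
    | 0 =>
      simp only [Nat.zero_mod, if_pos rfl]
      show R a (av 0)
      rw [h0]; exact hab
    | Nat.succ j =>
      show (if (j + 1) % 2 = 0 then R else S) (av j) (av (j + 1))
      have := hcons j
      rcases Nat.mod_two_eq_zero_or_one j with hj | hj
      · rw [if_pos hj] at this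
        rw [if_neg (by omega)]
        exact this
      · rw [if_neg (by omega)] at this
        rw [if_pos (by omega)]
        exact this

/-! ### Trees -/

inductive T3 : Type
  | lf (f g : ℕ) : T3
  | nd (x y z : T3) : T3

variable (A) in
def xev (t : Term σ 3) (av : ℕ → A.carrier) : T3 → A.carrier
  | .lf f _ => av f
  | .nd x y z => tApp A t (xev t av x) (xev t av y) (xev t av z)

variable (A) in
def yev (t : Term σ 3) (av : ℕ → A.carrier) : T3 → A.carrier
  | .lf _ g => av g
  | .nd x y z => tApp A t (yev t av x) (yev t av y) (yev t av z)

def mapL (mf mg : ℕ → ℕ → ℕ) : T3 → T3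
  | .lf f g => .lf (mf f g) (mg f g)
  | .nd x y z => .nd (mapL mf mg x) (mapL mf mg y) (mapL mf mg z)

def Leaves (P : ℕ → ℕ → Prop) : T3 → Prop
  | .lf f g => P f g
  | .nd x y z => Leaves P x ∧ Leaves P y ∧ Leaves P z

def epsv (pe f g : ℕ) : ℕ := if f + 2 ≤ g ∧ f % 2 = pe then 1 else 0
def delv (pd f g : ℕ) : ℕ := if f + 1 ≤ g ∧ (g - 1) % 2 = pd then 1 else 0
def m1f (pe : ℕ) (f g : ℕ) : ℕ := f + epsv pe f g
def m0g (pd : ℕ) (f g : ℕ) : ℕ := g - delv pd f g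

def treeStep (pe pd : ℕ) (T : T3) : T3 :=
  .nd (mapL (fun f _ => f) (m0g pd) T) (mapL (m1f pe) (m0g pd) T)
    (mapL (m1f pe) (fun _ g => g) T)

def Tseq (n : ℕ) : ℕ → T3
  | 0 => .lf 0 n
  | k + 1 => treeStep (k % 4 / 2) (k % 2) (Tseq n k)

theorem xev_mapL_congr (t : Term σ 3) (av : ℕ → A.carrier) (mf mg mg' : ℕ → ℕ → ℕ) :
    ∀ T, xev A t av (mapL mf mg T) = xev A t av (mapL mf mg' T) := by
  intro T
  induction T with
  | lf f g => rfl
  | nd x y z ihx ihy ihz => simp only [mapL, xev, ihx, ihy, ihz]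

theorem xev_mapL_id (t : Term σ 3) (av : ℕ → A.carrier) (mg : ℕ → ℕ → ℕ) :
    ∀ T, xev A t av (mapL (fun f _ => f) mg T) = xev A t av T := by
  intro T
  induction T with
  | lf f g => rfl
  | nd x y z ihx ihy ihz => simp only [mapL, xev, ihx, ihy, ihz]

theorem yev_mapL_congr (t : Term σ 3) (av : ℕ → A.carrier) (mf mf' mg : ℕ → ℕ → ℕ) :
    ∀ T, yev A t av (mapL mf mg T) = yev A t av (mapL mf' mg T) := by
  intro T
  induction T with
  | lf f g => rfl
  | nd x y z ihx ihy ihz => simp only [mapL, yev, ihx, ihy, ihz]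

theorem yev_mapL_id (t : Term σ 3) (av : ℕ → A.carrier) (mf : ℕ → ℕ → ℕ) :
    ∀ T, yev A t av (mapL mf (fun _ g => g) T) = yev A t av T := by
  intro T
  induction T with
  | lf f g => rfl
  | nd x y z ihx ihy ihz => simp only [mapL, yev, ihx, ihy, ihz]

section Chain

variable (t : Term σ 3) (av : ℕ → A.carrier) {R S : Rel A}

theorem x_shift_rel {X : Rel A} (hXr : Reflexive X) (hXc : Compatible A X)
    {pe : ℕ} (hX : ∀ i, i % 2 = pe → X (av i) (av (i + 1))) (mg : ℕ → ℕ → ℕ) :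
    ∀ T, X (xev A t av T) (xev A t av (mapL (m1f pe) mg T)) := by
  intro T
  induction T with
  | lf f g =>
    show X (av f) (av (m1f pe f g))
    by_cases hc : f + 2 ≤ g ∧ f % 2 = pe
    · have : m1f pe f g = f + 1 := by simp [m1f, epsv, if_pos hc]
      rw [this]
      exact hX f hc.2
    · have : m1f pe f g = f := by simp [m1f, epsv, if_neg hc]
      rw [this]
      exact hXr _
  | nd x y z ihx ihy ihz => exact tApp_compat hXc t ihx ihy ihz

theorem y_shift_rel {X : Rel A} (hXr : Reflexive X) (hXc : Compatible A X)
    {pd : ℕ} (hX : ∀ i, i % 2 = pd → X (av i) (av (i + 1))) (mf : ℕ → ℕ → ℕ) :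
    ∀ T, X (yev A t av (mapL mf (m0g pd) T)) (yev A t av T) := by
  intro T
  induction T with
  | lf f g =>
    show X (av (m0g pd f g)) (av g)
    by_cases hc : f + 1 ≤ g ∧ (g - 1) % 2 = pd
    · have h1 : m0g pd f g = g - 1 := by simp only [m0g, delv, if_pos hc]
      have h2 : g - 1 + 1 = g := by omega
      rw [h1]
      have := hX (g - 1) hc.2
      rwa [h2] at this
    · have : m0g pd f g = g := by simp only [m0g, delv, if_neg hc, Nat.sub_zero]
      rw [this]
      exact hXr _
  | nd x y z ihx ihy ihz => exact tApp_compat hXc t ihx ihy ihz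

variable {F G : Rel A → Rel A}

theorem xstep (ht : MalcevMod A F G t) (hR : RAdm A R) (hS : RAdm A S)
    (hav : ∀ i, (if i % 2 = 0 then R else S) (av i) (av (i + 1)))
    (T : T3) (pe pd : ℕ) :
    F (if pe = 0 then R else S) (xev A t av T) (xev A t av (treeStep pe pd T)) := by
  set X : Rel A := if pe = 0 then R else S with hXdef
  have hXa : RAdm A X := by
    rw [hXdef]; split
    · exact hR
    · exact hS
  have hX : ∀ i, i % 2 = pe → X (av i) (av (i + 1)) := by
    intro i hi
    have := hav i
    rw [hXdef]
    by_cases h0 : pe = 0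
    · rw [if_pos h0]
      rwa [if_pos (h0 ▸ hi)] at this
    · rw [if_neg h0]
      rwa [if_neg (fun hh => h0 (hi ▸ hh))] at this
  have hrel : X (xev A t av T) (xev A t av (mapL (m1f pe) (fun _ g => g) T)) :=
    x_shift_rel t av hXa.1 hXa.2 hX _ T
  have h2 : xev A t av (treeStep pe pd T)
      = tApp A t (xev A t av T) (xev A t av (mapL (m1f pe) (fun _ g => g) T))
          (xev A t av (mapL (m1f pe) (fun _ g => g) T)) := by
    show tApp A t (xev A t av (mapL (fun f _ => f) (m0g pd) T))
        (xev A t av (mapL (m1f pe) (m0g pd) T)) (xev A t av (mapL (m1f pe) (fun _ g => g) T)) = _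
    rw [xev_mapL_id, xev_mapL_congr t av (m1f pe) (m0g pd) (fun _ g => g)]
  rw [h2]
  exact (ht X hXa _ _ hrel).1

theorem gstep (ht : MalcevMod A F G t) (hR : RAdm A R) (hS : RAdm A S)
    (hav : ∀ i, (if i % 2 = 0 then R else S) (av i) (av (i + 1)))
    (T : T3) (pe pd : ℕ) :
    G (if pd = 0 then R else S) (yev A t av (treeStep pe pd T)) (yev A t av T) := by
  set X : Rel A := if pd = 0 then R else S with hXdef
  have hXa : RAdm A X := by
    rw [hXdef]; split
    · exact hR
    · exact hS
  have hX : ∀ i, i % 2 = pd → X (av i) (av (i + 1)) := by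
    intro i hi
    have := hav i
    rw [hXdef]
    by_cases h0 : pd = 0
    · rw [if_pos h0]
      rwa [if_pos (h0 ▸ hi)] at this
    · rw [if_neg h0]
      rwa [if_neg (fun hh => h0 (hi ▸ hh))] at this
  have hrel : X (yev A t av (mapL (fun f _ => f) (m0g pd) T)) (yev A t av T) :=
    y_shift_rel t av hXa.1 hXa.2 hX _ T
  have h2 : yev A t av (treeStep pe pd T)
      = tApp A t (yev A t av (mapL (fun f _ => f) (m0g pd) T))
          (yev A t av (mapL (fun f _ => f) (m0g pd) T)) (yev A t av T) := by
    show tApp A t (yev A t av (mapL (fun f _ => f) (m0g pd) T))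
        (yev A t av (mapL (m1f pe) (m0g pd) T)) (yev A t av (mapL (m1f pe) (fun _ g => g) T)) = _
    rw [yev_mapL_id, yev_mapL_congr t av (m1f pe) (fun f _ => f) (m0g pd)]
  rw [h2]
  exact (ht X hXa _ _ hrel).2

theorem qrel (hR : RAdm A R) (hS : RAdm A S)
    (hav : ∀ i, (if i % 2 = 0 then R else S) (av i) (av (i + 1))) :
    ∀ T, Leaves (fun f g => f ≤ g ∧ g ≤ f + 1) T →
      cl A (fun u v => R u v ∨ S u v) (xev A t av T) (yev A t av T) := by
  intro T
  induction T with
  | lf f g =>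
    intro hT
    obtain ⟨h1, h2⟩ := hT
    show cl A _ (av f) (av g)
    by_cases hg : g = f
    · subst hg
      exact cl_base (Or.inl (hR.1 _))
    · have hg1 : g = f + 1 := by omega
      subst hg1
      have := hav f
      rcases Nat.mod_two_eq_zero_or_one f with hf | hf
      · rw [if_pos hf] at this
        exact cl_base (Or.inl this)
      · rw [if_neg (by omega)] at this
        exact cl_base (Or.inr this)
  | nd x y z ihx ihy ihz =>
    intro hT
    obtain ⟨hx, hy, hz⟩ := hT
    exact tApp_compat (cl_compatible _) t (ihx hx) (ihy hy) (ihz hz)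

end Chain

/-! ### Per-leaf dynamics -/

def Reach (pe pd f g f' g' : ℕ) : Prop :=
  (f' = f ∧ g' = m0g pd f g) ∨ (f' = m1f pe f g ∧ g' = m0g pd f g) ∨
    (f' = m1f pe f g ∧ g' = g)

theorem reach_mono {pe pd f g f' g' : ℕ} (hfg : f ≤ g) (h : Reach pe pd f g f' g') :
    f ≤ f' ∧ g' ≤ g ∧ f' ≤ g' ∧ g' - f' ≤ g - f ∧
      ((f' = f ∧ g' = g) ∨ g' - f' + 1 ≤ g - f) := by
  simp only [Reach, m1f, m0g, epsv, delv] at h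
  rcases h with ⟨h1, h2⟩ | ⟨h1, h2⟩ | ⟨h1, h2⟩ <;> subst h1 <;> subst h2 <;>
    split_ifs <;> omega

theorem reach_fire {pe pd f g f' g' : ℕ} (hd : f + 2 ≤ g) (hpe : f % 2 = pe)
    (hpd : (g - 1) % 2 = pd) (h : Reach pe pd f g f' g') : g' - f' + 1 ≤ g - f := by
  simp only [Reach, m1f, m0g, epsv, delv] at h
  rcases h with ⟨h1, h2⟩ | ⟨h1, h2⟩ | ⟨h1, h2⟩ <;> subst h1 <;> subst h2 <;>
    split_ifs <;> omega

theorem reach_block {f g f1 g1 f2 g2 f3 g3 f4 g4 : ℕ} (hfg : f ≤ g)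
    (h1 : Reach 0 0 f g f1 g1) (h2 : Reach 0 1 f1 g1 f2 g2)
    (h3 : Reach 1 0 f2 g2 f3 g3) (h4 : Reach 1 1 f3 g3 f4 g4) :
    f4 ≤ g4 ∧ g4 - f4 ≤ g - f ∧ (g4 - f4 ≤ 1 ∨ g4 - f4 + 1 ≤ g - f) := by
  obtain ⟨m1a, m1b, m1c, m1d, m1e⟩ := reach_mono hfg h1
  obtain ⟨m2a, m2b, m2c, m2d, m2e⟩ := reach_mono m1c h2
  obtain ⟨m3a, m3b, m3c, m3d, m3e⟩ := reach_mono m2c h3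
  obtain ⟨m4a, m4b, m4c, m4d, m4e⟩ := reach_mono m3c h4
  refine ⟨m4c, by omega, ?_⟩
  by_cases hbig : f + 2 ≤ g
  swap
  · left; omega
  rcases Nat.mod_two_eq_zero_or_one f with hf | hf <;>
    rcases Nat.mod_two_eq_zero_or_one (g - 1) with hg | hg
  · have := reach_fire hbig hf hg h1
    omega
  · rcases m1e with ⟨e1, e2⟩ | hlt
    · subst e1; subst e2
      have := reach_fire hbig hf hg h2
      omega
    · omega
  · rcases m1e with ⟨e1, e2⟩ | hlt
    · subst e1; subst e2
      rcases m2e with ⟨e3, e4⟩ | hlt2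
      · subst e3; subst e4
        have := reach_fire hbig hf hg h3
        omega
      · omega
    · omega
  · rcases m1e with ⟨e1, e2⟩ | hlt
    · subst e1; subst e2
      rcases m2e with ⟨e3, e4⟩ | hlt2
      · subst e3; subst e4
        rcases m3e with ⟨e5, e6⟩ | hlt3
        · subst e5; subst e6
          have := reach_fire hbig hf hg h4
          omega
        · omega
      · omega
    · omega

theorem leaves_mono {P P' : ℕ → ℕ → Prop} (h : ∀ f g, P f g → P' f g) :
    ∀ T, Leaves P T → Leaves P' T := by
  intro T
  induction T with
  | lf f g => exact h f g
  | nd x y z ihx ihy ihz => exact fun ⟨a, b, c⟩ => ⟨ihx a, ihy b, ihz c⟩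

theorem leaves_mapL {P : ℕ → ℕ → Prop} {mf mg : ℕ → ℕ → ℕ} :
    ∀ T, Leaves (fun f g => P (mf f g) (mg f g)) T → Leaves P (mapL mf mg T) := by
  intro T
  induction T with
  | lf f g => exact id
  | nd x y z ihx ihy ihz => exact fun ⟨a, b, c⟩ => ⟨ihx a, ihy b, ihz c⟩

theorem leaves_treeStep {P : ℕ → ℕ → Prop} {pe pd : ℕ} {T : T3}
    (h : Leaves (fun f g => ∀ f' g', Reach pe pd f g f' g' → P f' g') T) :
    Leaves P (treeStep pe pd T) := by
  refine ⟨leaves_mapL T ?_, leaves_mapL T ?_, leaves_mapL T ?_⟩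
  · exact leaves_mono (fun f g hh => hh _ _ (Or.inl ⟨rfl, rfl⟩)) T h
  · exact leaves_mono (fun f g hh => hh _ _ (Or.inr (Or.inl ⟨rfl, rfl⟩))) T h
  · exact leaves_mono (fun f g hh => hh _ _ (Or.inr (Or.inr ⟨rfl, rfl⟩))) T h

theorem inv_leaves (n : ℕ) :
    ∀ k, Leaves (fun f g => f ≤ g ∧ (g - f ≤ 1 ∨ g - f + k ≤ n)) (Tseq n (4 * k)) := by
  intro k
  induction k with
  | zero =>
    show Leaves _ (T3.lf 0 n)
    exact ⟨by omega, by omega⟩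
  | succ k ih =>
    have e1 : Tseq n (4 * (k + 1)) =
        treeStep 1 1 (treeStep 1 0 (treeStep 0 1 (treeStep 0 0 (Tseq n (4 * k))))) := by
      have e : 4 * (k + 1) = (4 * k + 3) + 1 := by ring
      rw [e]
      show treeStep ((4 * k + 3) % 4 / 2) ((4 * k + 3) % 2) (Tseq n (4 * k + 3)) = _
      have h3a : (4 * k + 3) % 4 / 2 = 1 := by omega
      have h3b : (4 * k + 3) % 2 = 1 := by omega
      rw [h3a, h3b]
      show treeStep 1 1 (treeStep ((4 * k + 2) % 4 / 2) ((4 * k + 2) % 2) (Tseq n (4 * k + 2))) = _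
      have h2a : (4 * k + 2) % 4 / 2 = 1 := by omega
      have h2b : (4 * k + 2) % 2 = 0 := by omega
      rw [h2a, h2b]
      show treeStep 1 1 (treeStep 1 0
        (treeStep ((4 * k + 1) % 4 / 2) ((4 * k + 1) % 2) (Tseq n (4 * k + 1)))) = _
      have h1a : (4 * k + 1) % 4 / 2 = 0 := by omega
      have h1b : (4 * k + 1) % 2 = 1 := by omega
      rw [h1a, h1b]
      show treeStep 1 1 (treeStep 1 0 (treeStep 0 1
        (treeStep ((4 * k) % 4 / 2) ((4 * k) % 2) (Tseq n (4 * k))))) = _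
      have h0a : (4 * k) % 4 / 2 = 0 := by omega
      have h0b : (4 * k) % 2 = 0 := by omega
      rw [h0a, h0b]
    rw [e1]
    apply leaves_treeStep
    apply leaves_treeStep
    apply leaves_treeStep
    apply leaves_treeStep
    refine leaves_mono ?_ _ ih
    intro f g hfg f1 g1 r1 f2 g2 r2 f3 g3 r3 f4 g4 r4
    obtain ⟨hle, hbd⟩ := hfg
    obtain ⟨b1, b2, b3⟩ := reach_block hle r1 r2 r3 r4
    exact ⟨b1, by omega⟩

end Aux


/-- Theorem 1(v):
`R + S ⊆ (F(R)+F(S)) ∘ cl(R ∪ S) ∘ (G(R)+G(S)) ⊆ (F(R)+F(S)) ∘ R ∘ S ∘ (G(R)+G(S))`. -/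
theorem stmt4 {σ : Signature} (A : UAAlgebra σ) (F G : Rel A → Rel A)
    (hF : ∀ R, RAdm A R → RAdm A (F R)) (hG : ∀ R, RAdm A R → RAdm A (G R))
    (t : Term σ 3) (ht : MalcevMod A F G t)
    (R S : Rel A) (hR : RAdm A R) (hS : RAdm A S) :
    (∀ a c, join R S a c →
        comp (join (F R) (F S))
          (comp (cl A (fun u v => R u v ∨ S u v)) (join (G R) (G S))) a c) ∧
    (∀ a c, comp (join (F R) (F S))
          (comp (cl A (fun u v => R u v ∨ S u v)) (join (G R) (G S))) a c →
        comp (join (F R) (F S)) (comp R (comp S (join (G R) (G S)))) a c) := by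
  constructor
  · intro a c hac
    obtain ⟨n, hn⟩ := hac
    obtain ⟨av, h0, hnc, hav⟩ := Aux.exists_chain n R S hR.1 hS.1 hn
    have hFR := hF R hR
    have hFS := hF S hS
    have hGR := hG R hR
    have hGS := hG S hS
    have xchain : ∀ m, join (F R) (F S) (av 0) (Aux.xev A t av (Aux.Tseq n m)) := by
      intro m
      induction m with
      | zero => exact Aux.join_refl _
      | succ m ih =>
        refine Aux.join_tail hFR.1 hFS.1 ih ?_
        have hst := Aux.xstep t av ht hR hS hav (Aux.Tseq n m) (m % 4 / 2) (m % 2)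
        by_cases hpe : m % 4 / 2 = 0
        · rw [if_pos hpe] at hst
          exact Or.inl hst
        · rw [if_neg hpe] at hst
          exact Or.inr hst
    have ychain : ∀ m, join (G R) (G S) (Aux.yev A t av (Aux.Tseq n m)) (av n) := by
      intro m
      induction m with
      | zero => exact Aux.join_refl _
      | succ m ih =>
        refine Aux.join_head hGR.1 hGS.1 ?_ ih
        have hst := Aux.gstep t av ht hR hS hav (Aux.Tseq n m) (m % 4 / 2) (m % 2)
        by_cases hpd : m % 2 = 0
        · rw [if_pos hpd] at hst
          exact Or.inl hst
        · rw [if_neg hpd] at hst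
          exact Or.inr hst
    refine ⟨Aux.xev A t av (Aux.Tseq n (4 * n)), h0 ▸ xchain (4 * n),
      Aux.yev A t av (Aux.Tseq n (4 * n)), ?_, hnc ▸ ychain (4 * n)⟩
    apply Aux.qrel t av hR hS hav
    refine Aux.leaves_mono ?_ _ (Aux.inv_leaves n n)
    intro f g hfg
    obtain ⟨h1, h2⟩ := hfg
    exact ⟨h1, by omega⟩
  · intro a c h
    obtain ⟨x, hx, y, hcl, hy⟩ := h
    have hcomp : Compatible A (comp R S) := by
      intro s f g hfg
      choose b hb1 hb2 using hfg
      exact ⟨A.ops s b, hR.2 s f b hb1, hS.2 s b g hb2⟩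
    have hsub : comp R S x y := by
      refine hcl (comp R S) hcomp ?_
      intro u v huv
      rcases huv with h' | h'
      · exact ⟨v, h', hS.1 v⟩
      · exact ⟨u, hR.1 u, h'⟩
    obtain ⟨m, hm1, hm2⟩ := hsub
    exact ⟨x, hx, m, hm1, y, hm2, hy⟩
end

section
/- Let A be an algebra with a term t Mal'cev modulo F and G. Then for n ≥ 2 and reflexive admissible relations R₁, …, Rₙ on A: R₁ ∘ R₂ ∘ ⋯ ∘ Rₙ ⊆ F(R₁) ∘ cl(F(R₁) ∪ F(R₂)) ∘ cl(F(R₁) ∪ F(R₂) ∪ F(R₃)) ∘ ⋯ ∘ cl(F(R₁) ∪ ⋯ ∪ F(R_{n−1})) ∘ cl(R₁ ∪ ⋯ ∪ Rₙ) ∘ cl(G(R₂) ∪ ⋯ ∪ G(Rₙ)) ∘ cl(G(R₃) ∪ ⋯ ∪ G(Rₙ)) ∘ ⋯ ∘ cl(G(R_{n−1}) ∪ G(Rₙ)) ∘ G(Rₙ), where cl(X) is the least compatible relation containing X. -/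
namespace Paper

variable {σ : Signature}

theorem compat_eval {A : UAAlgebra σ} {S : Rel A} (hS : Compatible A S)
    {m : ℕ} (tm : Term σ m) (e e' : Fin m → A.carrier)
    (h : ∀ k, S (e k) (e' k)) : S (tm.eval A e) (tm.eval A e') := by
  induction tm with
  | var k => exact h k
  | op s args ih => exact hS s _ _ fun j => ih j

theorem tApp_compat {A : UAAlgebra σ} {S : Rel A} (hS : Compatible A S)
    (t : Term σ 3) {x x' y y' z z' : A.carrier}
    (hx : S x x') (hy : S y y') (hz : S z z') :
    S (tApp A t x y z) (tApp A t x' y' z') := by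
  apply compat_eval hS
  intro k
  fin_cases k <;> simpa

/-- two-parameter tower with common recursion. -/
def fam (A : UAAlgebra σ) (t : Term σ 3) (b0 b1 : ℕ → A.carrier) : ℕ → ℕ → A.carrier
  | 0, j => b0 j
  | 1, j => b1 j
  | (r+2), j =>
      tApp A t (fam A t b0 b1 (r+1) j) (fam A t b0 b1 r (j+1)) (fam A t b0 b1 (r+1) (j+1))

theorem fam_step {A : UAAlgebra σ} (t : Term σ 3) (u v : ℕ → ℕ → A.carrier)
    (hu : ∀ r j, u (r+2) j = tApp A t (u (r+1) j) (u r (j+1)) (u (r+1) (j+1)))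
    (hv : ∀ r j, v (r+2) j = tApp A t (v (r+1) j) (v r (j+1)) (v (r+1) (j+1)))
    (S : Rel A) (hS : Compatible A S) :
    ∀ r j, (∀ j', j ≤ j' → j' ≤ j + r → S (u 0 j') (v 0 j')) →
      (∀ j', j ≤ j' → j' + 1 ≤ j + r → S (u 1 j') (v 1 j')) →
      S (u r j) (v r j) := by
  intro r
  induction r using Nat.strong_induction_on with
  | _ r IH =>
    match r with
    | 0 => exact fun j h0 _ => h0 j le_rfl (Nat.le_add_right _ _)
    | 1 => exact fun j _ h1 => h1 j le_rfl (by omega)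
    | (r+2) =>
      intro j h0 h1
      rw [hu, hv]
      exact tApp_compat hS t
        (IH (r+1) (by omega) j (fun j' h h' => h0 j' h (by omega))
          (fun j' h h' => h1 j' h (by omega)))
        (IH r (by omega) (j+1) (fun j' h h' => h0 j' (by omega) (by omega))
          (fun j' h h' => h1 j' (by omega) (by omega)))
        (IH (r+1) (by omega) (j+1) (fun j' h h' => h0 j' (by omega) (by omega))
          (fun j' h h' => h1 j' (by omega) (by omega)))

def phiF (A : UAAlgebra σ) (t : Term σ 3) (B : ℕ → A.carrier) : ℕ → ℕ → A.carrier :=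
  fam A t B (fun j => tApp A t (B j) (B (j+1)) (B (j+1)))

def psiG (A : UAAlgebra σ) (t : Term σ 3) (B : ℕ → A.carrier) : ℕ → ℕ → A.carrier :=
  fam A t B (fun j => tApp A t (B j) (B j) (B (j+1)))

section Steps

variable {A : UAAlgebra σ} (F G : Rel A → Rel A) (t : Term σ 3)
  (Q : ℕ → Rel A) (B : ℕ → A.carrier)

theorem stepF_aux (ht : MalcevMod A F G t)
    (hQ : ∀ i, RAdm A (Q i)) (hB : ∀ i, Q i (B i) (B (i+1)))
    (S : Rel A) (hSr : Reflexive S) (hSc : Compatible A S)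
    (r j : ℕ) (hsub : ∀ i, j ≤ i → i ≤ j + r → ∀ x y, F (Q i) x y → S x y) :
    S (phiF A t B r j) (phiF A t B (r+1) j) := by
  apply fam_step t (fun r j => phiF A t B r j) (fun r j => phiF A t B (r+1) j)
    (fun r j => rfl) (fun r j => rfl) S hSc r j
  · intro j' h1 h2
    exact hsub j' h1 (by omega) _ _ (ht (Q j') (hQ j') (B j') (B (j'+1)) (hB j')).1
  · intro j' h1 h2
    show S (phiF A t B 1 j') (phiF A t B 2 j')
    exact tApp_compat hSc t
      (hsub j' h1 (by omega) _ _ (ht (Q j') (hQ j') _ _ (hB j')).1)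
      (hSr _)
      (hsub (j'+1) (by omega) (by omega) _ _ (ht (Q (j'+1)) (hQ (j'+1)) _ _ (hB (j'+1))).1)

theorem stepG_aux (ht : MalcevMod A F G t)
    (hQ : ∀ i, RAdm A (Q i)) (hB : ∀ i, Q i (B i) (B (i+1)))
    (S : Rel A) (hSr : Reflexive S) (hSc : Compatible A S)
    (r j : ℕ) (hsub : ∀ i, j ≤ i → i ≤ j + r → ∀ x y, G (Q i) x y → S x y) :
    S (psiG A t B (r+1) j) (psiG A t B r (j+1)) := by
  apply fam_step t (fun r j => psiG A t B (r+1) j) (fun r j => psiG A t B r (j+1))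
    (fun r j => rfl) (fun r j => rfl) S hSc r j
  · intro j' h1 h2
    exact hsub j' h1 (by omega) _ _ (ht (Q j') (hQ j') (B j') (B (j'+1)) (hB j')).2
  · intro j' h1 h2
    show S (psiG A t B 2 j') (psiG A t B 1 (j'+1))
    exact tApp_compat hSc t
      (hsub j' h1 (by omega) _ _ (ht (Q j') (hQ j') _ _ (hB j')).2)
      (hSr _)
      (hsub (j'+1) (by omega) (by omega) _ _ (ht (Q (j'+1)) (hQ (j'+1)) _ _ (hB (j'+1))).2)

theorem stepM_aux
    (hB : ∀ i, Q i (B i) (B (i+1)))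
    (S : Rel A) (hSr : Reflexive S) (hSc : Compatible A S)
    (r j : ℕ) (hsub : ∀ i, j ≤ i → i ≤ j + r → ∀ x y, Q i x y → S x y) :
    S (phiF A t B r j) (psiG A t B r (j+1)) := by
  apply fam_step t (fun r j => phiF A t B r j) (fun r j => psiG A t B r (j+1))
    (fun r j => rfl) (fun r j => rfl) S hSc r j
  · intro j' h1 h2
    exact hsub j' h1 (by omega) _ _ (hB j')
  · intro j' h1 h2
    show S (phiF A t B 1 j') (psiG A t B 1 (j'+1))
    exact tApp_compat hSc t
      (hsub j' h1 (by omega) _ _ (hB j'))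
      (hSr _)
      (hsub (j'+1) (by omega) (by omega) _ _ (hB (j'+1)))

end Steps

theorem cl_compat {A : UAAlgebra σ} (X : Rel A) : Compatible A (cl A X) :=
  fun s f g h S hc hsub => hc s f g fun j => h j S hc hsub

theorem cl_sub {A : UAAlgebra σ} {X : Rel A} {x y : A.carrier} (h : X x y) : cl A X x y :=
  fun _ _ hsub => hsub x y h

theorem cl_refl {A : UAAlgebra σ} {X : Rel A} (h : ∀ x, X x x) : Reflexive (cl A X) :=
  fun x _ _ hsub => hsub x x (h x)

theorem compList_append' {A : UAAlgebra σ} (l₁ l₂ : List (Rel A)) (x z : A.carrier)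
    (h : ∃ y, compList l₁ x y ∧ compList l₂ y z) : compList (l₁ ++ l₂) x z := by
  induction l₁ generalizing x with
  | nil =>
    obtain ⟨y, h1, h2⟩ := h
    have : x = y := h1
    simpa [this] using h2
  | cons r l ih =>
    obtain ⟨y, ⟨w, hw, hl⟩, h2⟩ := h
    exact ⟨w, hw, ih _ ⟨y, hl, h2⟩⟩

theorem compList_range {A : UAAlgebra σ} (g : ℕ → Rel A) (x : ℕ → A.carrier) :
    ∀ m, (∀ k, k < m → g k (x k) (x (k+1))) →
      compList ((List.range m).map g) (x 0) (x m)
  | 0, _ => rfl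
  | (m+1), h => by
    rw [List.range_succ, List.map_append]
    exact compList_append' _ _ _ _
      ⟨x m, compList_range g x m (fun k hk => h k (by omega)),
        ⟨x (m+1), h m (by omega), rfl⟩⟩

theorem chain_of_compList {A : UAAlgebra σ} :
    ∀ (n : ℕ) (R : Fin n → Rel A) (a c : A.carrier),
      compList (List.ofFn R) a c →
      ∃ B : ℕ → A.carrier, B 0 = a ∧ B n = c ∧
        ∀ i (h : i < n), R ⟨i, h⟩ (B i) (B (i + 1))
  | 0, R, a, c, h => by
    have hac : a = c := h
    exact ⟨fun _ => a, rfl, hac.symm ▸ rfl, fun i h => absurd h (Nat.not_lt_zero i)⟩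
  | (n+1), R, a, c, h => by
    rw [List.ofFn_succ] at h
    obtain ⟨b, hab, htail⟩ := h
    obtain ⟨B, hB0, hBn, hBstep⟩ := chain_of_compList n (fun i => R i.succ) b c htail
    refine ⟨fun i => match i with | 0 => a | (i+1) => B i, rfl, hBn, ?_⟩
    intro i hi
    match i with
    | 0 =>
      show R ⟨0, hi⟩ a (B 0)
      rw [hB0]
      exact hab
    | (i+1) => exact hBstep i (by omega)

end Paper

open Paper
/-- Theorem 1(xii): for `n ≥ 2`,
`R₁ ∘ ⋯ ∘ Rₙ ⊆ F(R₁) ∘ cl(F(R₁) ∪ F(R₂)) ∘ ⋯ ∘ cl(F(R₁) ∪ ⋯ ∪ F(R_{n-1}))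
∘ cl(R₁ ∪ ⋯ ∪ Rₙ) ∘ cl(G(R₂) ∪ ⋯ ∪ G(Rₙ)) ∘ ⋯ ∘ cl(G(R_{n-1}) ∪ G(Rₙ)) ∘ G(Rₙ)`. -/
theorem stmt11 {σ : Signature} (A : UAAlgebra σ) (F G : Rel A → Rel A)
    (hF : ∀ R, RAdm A R → RAdm A (F R)) (hG : ∀ R, RAdm A R → RAdm A (G R))
    (t : Term σ 3) (ht : MalcevMod A F G t)
    (n : ℕ) (hn : 2 ≤ n) (R : Fin n → Rel A) (hRs : ∀ i, RAdm A (R i)) :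
    ∀ a c, compList (List.ofFn R) a c →
      comp (F (R ⟨0, by omega⟩))
        (compList
          (((List.range (n - 2)).map fun k =>
              cl A (fun u v => ∃ i : Fin n, (i : ℕ) ≤ k + 1 ∧ F (R i) u v)) ++
            [cl A (fun u v => ∃ i : Fin n, R i u v)] ++
            ((List.range (n - 2)).map fun k =>
              cl A (fun u v => ∃ i : Fin n, k + 1 ≤ (i : ℕ) ∧ G (R i) u v)) ++
            [G (R ⟨n - 1, by omega⟩)])) a c := by
  intro a c hac
  obtain ⟨B0, hB00, hB0n, hB0step⟩ := chain_of_compList n R a c hac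
  set B : ℕ → A.carrier := fun i => B0 (min i n) with hBdef
  set Q : ℕ → Rel A := fun i => if h : i < n then R ⟨i, h⟩ else Eq with hQdef
  have hQR : ∀ i (h : i < n), Q i = R ⟨i, h⟩ := fun i h => dif_pos h
  have hQadm : ∀ i, RAdm A (Q i) := by
    intro i
    by_cases h : i < n
    · rw [hQR i h]; exact hRs _
    · have : Q i = Eq := dif_neg h
      rw [this]
      exact ⟨fun x => rfl, fun s f g hfg => by
        have : f = g := funext hfg
        rw [this]⟩
  have hchain : ∀ i, Q i (B i) (B (i+1)) := by
    intro i
    by_cases h : i < n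
    · rw [hQR i h]
      have e1 : min i n = i := by omega
      have e2 : min (i+1) n = i+1 := by omega
      show R ⟨i, h⟩ (B0 (min i n)) (B0 (min (i+1) n))
      rw [e1, e2]
      exact hB0step i h
    · have hq : Q i = Eq := dif_neg h
      rw [hq]
      show B0 (min i n) = B0 (min (i+1) n)
      have : min i n = min (i+1) n := by omega
      rw [this]
  have hBa : B 0 = a := by
    show B0 (min 0 n) = a
    simpa using hB00
  have hBc : B n = c := by
    show B0 (min n n) = c
    simpa using hB0n
  refine ⟨phiF A t B 1 0, ?_, ?_⟩
  · -- F (R 0) a (phiF 1 0)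
    have h0 := (ht (Q 0) (hQadm 0) (B 0) (B 1) (hchain 0)).1
    rw [hQR 0 (by omega)] at h0
    rw [← hBa]
    exact h0
  · -- the big compList
    apply compList_append'
    refine ⟨psiG A t B 1 (n-1), ?_, ?_⟩
    · apply compList_append'
      refine ⟨psiG A t B (n-1) 1, ?_, ?_⟩
      · apply compList_append'
        refine ⟨phiF A t B (n-1) 0, ?_, ?_⟩
        · -- the F part
          have key := compList_range
            (g := fun k => cl A (fun u v => ∃ i : Fin n, (i : ℕ) ≤ k + 1 ∧ F (R i) u v))
            (x := fun k => phiF A t B (k+1) 0) (n-2) ?_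
          · have e : n - 2 + 1 = n - 1 := by omega
            rw [e] at key
            exact key
          · intro k hk
            apply stepF_aux F G t Q B ht hQadm hchain
            · exact cl_refl (fun x => ⟨⟨0, by omega⟩, by simp, (hF _ (hRs _)).1 x⟩)
            · exact cl_compat _
            · intro i hi1 hi2 x y hxy
              have hin : i < n := by omega
              rw [hQR i hin] at hxy
              exact cl_sub ⟨⟨i, hin⟩, by simpa using (by omega : i ≤ k + 1), hxy⟩
        · -- the middle singleton
          refine ⟨psiG A t B (n-1) 1, ?_, rfl⟩
          apply stepM_aux t Q B hchain
          · exact cl_refl (fun x => ⟨⟨0, by omega⟩, (hRs _).1 x⟩)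
          · exact cl_compat _
          · intro i hi1 hi2 x y hxy
            have hin : i < n := by omega
            rw [hQR i hin] at hxy
            exact cl_sub ⟨⟨i, hin⟩, hxy⟩
      · -- the G part
        have key := compList_range
          (g := fun k => cl A (fun u v => ∃ i : Fin n, k + 1 ≤ (i : ℕ) ∧ G (R i) u v))
          (x := fun k => psiG A t B (n-1-k) (k+1)) (n-2) ?_
        · have e1 : n - 1 - 0 = n - 1 := by omega
          have e2 : n - 1 - (n - 2) = 1 := by omega
          have e3 : n - 2 + 1 = n - 1 := by omega
          rw [e1, e2, e3] at key
          exact key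
        · intro k hk
          have er : n - 1 - k = (n - 2 - k) + 1 := by omega
          have er2 : n - 1 - (k + 1) = n - 2 - k := by omega
          show (cl A (fun u v => ∃ i : Fin n, k + 1 ≤ (i : ℕ) ∧ G (R i) u v))
            (psiG A t B (n-1-k) (k+1)) (psiG A t B (n-1-(k+1)) (k+1+1))
          rw [er, er2]
          have goal := stepG_aux F G t Q B ht hQadm hchain
            (cl A (fun u v => ∃ i : Fin n, k + 1 ≤ (i : ℕ) ∧ G (R i) u v))
            ?_ (cl_compat _) (n-2-k) (k+1) ?_
          · exact goal
          · exact cl_refl (fun x => ⟨⟨n-1, by omega⟩, by simp; omega, (hG _ (hRs _)).1 x⟩)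
          · intro i hi1 hi2 x y hxy
            have hin : i < n := by omega
            rw [hQR i hin] at hxy
            exact cl_sub ⟨⟨i, hin⟩, by simpa using hi1, hxy⟩
    · -- the last singleton
      refine ⟨c, ?_, rfl⟩
      have hlast := (ht (Q (n-1)) (hQadm (n-1)) (B (n-1)) (B (n-1+1)) (hchain (n-1))).2
      rw [hQR (n-1) (by omega)] at hlast
      have e : B (n - 1 + 1) = c := by
        rw [show n - 1 + 1 = n from by omega, hBc]
      rw [← e]
      exact hlast
end

section
/- Let V be a variety and F, G monotone global operators on V for reflexive admissible relations satisfying the homomorphism property. Suppose that in the free algebra X of V on three generators x, y, z one has S ∘ S ⊆ F_X(S) ∘ S ∘ G_X(S), where S is the smallest reflexive admissible relation on X containing both (x,y) and (y,z). Then V has a ternary term t that is Mal'cev modulo F_A and G_A in every algebra A of V. -/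
open Paper

namespace Paper

variable {σ : Signature}

/-- A set of equations (each in some number of variables). -/
abbrev EqTheory (σ : Signature) := Set (Σ n : ℕ, Term σ n × Term σ n)

/-- `A` belongs to the variety axiomatized by `E`. -/
def Satisfies (A : UAAlgebra σ) (E : EqTheory σ) : Prop :=
  ∀ e ∈ E, ∀ env : Fin e.1 → A.carrier, e.2.1.eval A env = e.2.2.eval A env

/-- Homomorphisms of algebras. -/
structure Hom (A B : UAAlgebra σ) where
  toFun : A.carrier → B.carrier
  map_ops : ∀ s f, toFun (A.ops s f) = B.ops s (toFun ∘ f)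

/-- `φ(R)`: the smallest reflexive compatible relation on the codomain containing
`{(φ b, φ c) : b R c}`. -/
def mapRel {A B : UAAlgebra σ} (φ : Hom A B) (R : Rel A) : Rel B :=
  clRefl B (fun x y => ∃ a b, R a b ∧ φ.toFun a = x ∧ φ.toFun b = y)

/-- `X` with distinguished elements `x, y` is the free algebra on two generators in
the variety of `E`. -/
def IsFree2 (E : EqTheory σ) (X : UAAlgebra σ) (x y : X.carrier) : Prop :=
  Satisfies X E ∧ ∀ A : UAAlgebra σ, Satisfies A E → ∀ a b : A.carrier,
    ∃! φ : Hom X A, φ.toFun x = a ∧ φ.toFun y = b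

/-- `X` with `x, y, z` is the free algebra on three generators in the variety of `E`. -/
def IsFree3 (E : EqTheory σ) (X : UAAlgebra σ) (x y z : X.carrier) : Prop :=
  Satisfies X E ∧ ∀ A : UAAlgebra σ, Satisfies A E → ∀ a b c : A.carrier,
    ∃! φ : Hom X A, φ.toFun x = a ∧ φ.toFun y = b ∧ φ.toFun z = c

/-- A global operator for reflexive admissible relations on the variety of `E`,
mapping reflexive admissible relations to reflexive admissible relations. -/
def GlobalOp (E : EqTheory σ)
    (F : ∀ A : UAAlgebra σ, Satisfies A E → Rel A → Rel A) : Prop :=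
  ∀ (A : UAAlgebra σ) (hA : Satisfies A E) (R : Rel A), RAdm A R → RAdm A (F A hA R)

/-- Monotonicity of a global operator. -/
def MonotoneOp (E : EqTheory σ)
    (F : ∀ A : UAAlgebra σ, Satisfies A E → Rel A → Rel A) : Prop :=
  ∀ (A : UAAlgebra σ) (hA : Satisfies A E) (R S : Rel A), RAdm A R → RAdm A S →
    (∀ a b, R a b → S a b) → ∀ a b, F A hA R a b → F A hA S a b

/-- The homomorphism property: `φ(F_B(R)) ⊆ F_A(φ(R))`. -/
def HomProp (E : EqTheory σ)
    (F : ∀ A : UAAlgebra σ, Satisfies A E → Rel A → Rel A) : Prop :=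
  ∀ (B A : UAAlgebra σ) (hB : Satisfies B E) (hA : Satisfies A E) (φ : Hom B A)
    (R : Rel B), RAdm B R →
    ∀ b c, F B hB R b c → F A hA (mapRel φ R) (φ.toFun b) (φ.toFun c)

end Paper

namespace Paper

variable {σ : Signature}

/-- Substitution of terms. -/
def Term.subst {n m : ℕ} : Term σ n → (Fin n → Term σ m) → Term σ m
  | .var k, f => f k
  | .op s args, f => .op s (fun j => (args j).subst f)

theorem eval_subst {n m : ℕ} (A : UAAlgebra σ) (t : Term σ n) (f : Fin n → Term σ m)
    (env : Fin m → A.carrier) :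
    (t.subst f).eval A env = t.eval A (fun i => (f i).eval A env) := by
  induction t with
  | var k => rfl
  | op s args ih =>
    show A.ops s _ = A.ops s _
    congr 1; funext j; exact ih j

theorem hom_eval {n : ℕ} {A B : UAAlgebra σ} (φ : Hom A B) (t : Term σ n)
    (env : Fin n → A.carrier) :
    φ.toFun (t.eval A env) = t.eval B (φ.toFun ∘ env) := by
  induction t with
  | var k => rfl
  | op s args ih =>
    show φ.toFun (A.ops s _) = B.ops s _
    rw [φ.map_ops]
    congr 1; funext j; exact ih j

theorem clRefl_radm (A : UAAlgebra σ) (X : Rel A) : RAdm A (clRefl A X) := by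
  constructor
  · intro a S hr _ _; exact hr a
  · intro s f g h S hr hc hb
    exact hc s f g (fun j => h j S hr hc hb)

theorem clRefl_base {A : UAAlgebra σ} {X : Rel A} {a b : A.carrier} (h : X a b) :
    clRefl A X a b := fun _ _ _ hb => hb a b h

theorem clRefl_min {A : UAAlgebra σ} {X S : Rel A} (hr : Reflexive S)
    (hc : Compatible A S) (hb : ∀ a b, X a b → S a b) :
    ∀ a b, clRefl A X a b → S a b := fun _ _ h => h S hr hc hb

/-- Every element of a free algebra on three generators is a term value of the
generators. -/
theorem free3_gen {E : EqTheory σ} {X : UAAlgebra σ} {x y z : X.carrier}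
    (hfree : IsFree3 E X x y z) :
    ∀ w : X.carrier, ∃ u : Term σ 3, w = u.eval X ![x, y, z] := by
  classical
  set env : Fin 3 → X.carrier := ![x, y, z] with henv
  let B : UAAlgebra σ :=
    { carrier := {w : X.carrier // ∃ u : Term σ 3, w = u.eval X env}
      ops := fun s f => ⟨X.ops s (fun j => (f j).1), by
        choose u hu using fun j => (f j).2
        refine ⟨.op s u, ?_⟩
        show X.ops s _ = X.ops s _
        congr 1; funext j; exact hu j⟩ }
  let ι : Hom B X := ⟨Subtype.val, fun s f => rfl⟩
  have hB : Satisfies B E := by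
    intro e he env'
    apply Subtype.ext
    have h1 := hom_eval ι e.2.1 env'
    have h2 := hom_eval ι e.2.2 env'
    show ι.toFun _ = ι.toFun _
    rw [h1, h2]
    exact hfree.1 e he _
  have hx : ∃ u : Term σ 3, x = u.eval X env := ⟨.var 0, rfl⟩
  have hy : ∃ u : Term σ 3, y = u.eval X env := ⟨.var 1, rfl⟩
  have hz : ∃ u : Term σ 3, z = u.eval X env := ⟨.var 2, rfl⟩
  obtain ⟨ψ, ⟨hψx, hψy, hψz⟩, -⟩ := hfree.2 B hB ⟨x, hx⟩ ⟨y, hy⟩ ⟨z, hz⟩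
  have compHom : Hom X X :=
    ⟨fun w => (ψ.toFun w).1, by
      intro s f
      show (ψ.toFun (X.ops s f)).1 = _
      rw [ψ.map_ops]; rfl⟩
  obtain ⟨θ, -, huniq⟩ := hfree.2 X hfree.1 x y z
  have h1 : (⟨fun w => (ψ.toFun w).1, by
      intro s f
      show (ψ.toFun (X.ops s f)).1 = _
      rw [ψ.map_ops]; rfl⟩ : Hom X X) = θ := by
    apply huniq
    refine ⟨?_, ?_, ?_⟩
    · show (ψ.toFun x).1 = x; rw [hψx]
    · show (ψ.toFun y).1 = y; rw [hψy]
    · show (ψ.toFun z).1 = z; rw [hψz]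
  have h2 : (⟨id, fun s f => rfl⟩ : Hom X X) = θ := by
    apply huniq; exact ⟨rfl, rfl, rfl⟩
  have h3 : ∀ w : X.carrier, (ψ.toFun w).1 = w := by
    intro w
    have := congrArg Hom.toFun (h1.trans h2.symm)
    exact congrFun this w
  intro w
  obtain ⟨u, hu⟩ := (ψ.toFun w).2
  exact ⟨u, by rw [← h3 w, hu]⟩

end Paper

/-- Theorem 3, (vii) ⇒ (i): if in the free algebra `X` of `V` on generators
`x, y, z` one has `S ∘ S ⊆ F_X(S) ∘ S ∘ G_X(S)`, where `S` is the smallest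
reflexive admissible relation containing `(x,y)` and `(y,z)`, then `V` has a
ternary term Mal'cev modulo `F_A` and `G_A` in every algebra `A` of `V`. -/
theorem stmt16 {σ : Signature} (E : EqTheory σ)
    (F G : ∀ A : UAAlgebra σ, Satisfies A E → Rel A → Rel A)
    (hF : GlobalOp E F) (hG : GlobalOp E G)
    (hFmono : MonotoneOp E F) (hGmono : MonotoneOp E G)
    (hFhom : HomProp E F) (hGhom : HomProp E G)
    (X : UAAlgebra σ) (x y z : X.carrier) (hfree : IsFree3 E X x y z)
    (hX : Satisfies X E)
    (hSS : ∀ a c,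
      comp (clRefl X (fun u v => (u = x ∧ v = y) ∨ (u = y ∧ v = z)))
        (clRefl X (fun u v => (u = x ∧ v = y) ∨ (u = y ∧ v = z))) a c →
      comp (F X hX (clRefl X (fun u v => (u = x ∧ v = y) ∨ (u = y ∧ v = z))))
        (comp (clRefl X (fun u v => (u = x ∧ v = y) ∨ (u = y ∧ v = z)))
          (G X hX (clRefl X (fun u v => (u = x ∧ v = y) ∨ (u = y ∧ v = z))))) a c) :
    ∃ t : Term σ 3,
      ∀ (A : UAAlgebra σ) (hA : Satisfies A E), MalcevMod A (F A hA) (G A hA) t := by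
  classical
  set S0 : Rel X := clRefl X (fun u v => (u = x ∧ v = y) ∨ (u = y ∧ v = z)) with hS0
  have hS0adm : RAdm X S0 := clRefl_radm X _
  have hxy : S0 x y := clRefl_base (Or.inl ⟨rfl, rfl⟩)
  have hyz : S0 y z := clRefl_base (Or.inr ⟨rfl, rfl⟩)
  obtain ⟨w₁, hxw₁, w₂, hw₁w₂, hw₂z⟩ := hSS x z ⟨y, hxy, hyz⟩
  -- the term relation S'
  set S' : Rel X := fun p q => ∃ u : Term σ 5,
      p = u.eval X ![x, y, z, x, y] ∧ q = u.eval X ![x, y, z, y, z] with hS'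
  have hS'refl : Reflexive S' := by
    intro w
    obtain ⟨u3, hu3⟩ := free3_gen hfree w
    refine ⟨u3.subst ![.var 0, .var 1, .var 2], ?_, ?_⟩ <;>
    · rw [eval_subst, hu3]
      congr 1
      funext i
      fin_cases i <;> rfl
  have hS'comp : Compatible X S' := by
    intro s f g h
    choose u hu1 hu2 using h
    exact ⟨.op s u, by
      show X.ops s _ = X.ops s _
      congr 1; funext j; exact hu1 j,
      by
      show X.ops s _ = X.ops s _
      congr 1; funext j; exact hu2 j⟩
  have hS'base : ∀ p q, (p = x ∧ q = y) ∨ (p = y ∧ q = z) → S' p q := by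
    rintro p q (⟨rfl, rfl⟩ | ⟨rfl, rfl⟩)
    · exact ⟨.var 3, rfl, rfl⟩
    · exact ⟨.var 4, rfl, rfl⟩
  obtain ⟨u, hw₁u, hw₂u⟩ := clRefl_min hS'refl hS'comp hS'base w₁ w₂ hw₁w₂
  -- the Mal'cev term
  refine ⟨u.subst ![.var 0, .var 1, .var 2, .var 0, .var 2], ?_⟩
  set t : Term σ 3 := u.subst ![.var 0, .var 1, .var 2, .var 0, .var 2] with ht
  have hteval : ∀ (A : UAAlgebra σ) (a b c : A.carrier),
      tApp A t a b c = u.eval A ![a, b, c, a, c] := by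
    intro A a b c
    show (u.subst _).eval A ![a, b, c] = _
    rw [eval_subst]
    congr 1
    funext i
    fin_cases i <;> rfl
  intro A hA R hR a b hab
  -- one generic step for both F and G
  have key : ∀ (H : ∀ A : UAAlgebra σ, Satisfies A E → Rel A → Rel A),
      GlobalOp E H → MonotoneOp E H → HomProp E H →
      ∀ (a' b' c' : A.carrier), R a' b' → R b' c' →
      ∀ p q : X.carrier, H X hX S0 p q →
      ∀ φ : Hom X A, φ.toFun x = a' → φ.toFun y = b' → φ.toFun z = c' →
      H A hA R (φ.toFun p) (φ.toFun q) := by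
    intro H hH hHmono hHhom a' b' c' hab' hbc' p q hpq φ hφx hφy hφz
    have h1 : H A hA (mapRel φ S0) (φ.toFun p) (φ.toFun q) :=
      hHhom X A hX hA φ S0 hS0adm p q hpq
    have hsub : ∀ p' q', mapRel φ S0 p' q' → R p' q' := by
      intro p' q' h
      refine h R hR.1 hR.2 ?_
      rintro p'' q'' ⟨v, w, hvw, rfl, rfl⟩
      -- S0 v w → R (φ v) (φ w)
      refine hvw (fun v w => R (φ.toFun v) (φ.toFun w)) (fun v => hR.1 _)
        (fun s f g hfg => ?_) ?_
      · show R (φ.toFun (X.ops s f)) (φ.toFun (X.ops s g))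
        rw [φ.map_ops, φ.map_ops]
        exact hR.2 s _ _ hfg
      · rintro v w (⟨rfl, rfl⟩ | ⟨rfl, rfl⟩)
        · rw [hφx, hφy]; exact hab'
        · rw [hφy, hφz]; exact hbc'
    exact hHmono A hA (mapRel φ S0) R (clRefl_radm A _) hR hsub _ _ h1
  obtain ⟨φ, ⟨hφx, hφy, hφz⟩, -⟩ := hfree.2 A hA a b b
  obtain ⟨ψ, ⟨hψx, hψy, hψz⟩, -⟩ := hfree.2 A hA a a b
  constructor
  · -- a F(R) t(a,b,b)
    have := key F hF hFmono hFhom a b b hab (hR.1 b) x w₁ hxw₁ φ hφx hφy hφz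
    rw [hφx] at this
    have hφw₁ : φ.toFun w₁ = tApp A t a b b := by
      rw [hteval, hw₁u, hom_eval]
      congr 1
      funext i
      fin_cases i <;> simp [Function.comp, hφx, hφy, hφz]
    rwa [hφw₁] at this
  · -- t(a,a,b) G(R) b
    have := key G hG hGmono hGhom a a b (hR.1 a) hab w₂ z hw₂z ψ hψx hψy hψz
    rw [hψz] at this
    have hψw₂ : ψ.toFun w₂ = tApp A t a a b := by
      rw [hteval, hw₂u, hom_eval]
      congr 1
      funext i
      fin_cases i <;> simp [Function.comp, hψx, hψy, hψz]
    rwa [hψw₂] at this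
end
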